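/- Let β > 0 and α with 2α > 1, and let h(y) = y/(β(1 - e^{-y(1+αy)})) extended by h(0) = 1/β. Then there exists a unique ȳ > 0 such that h is strictly decreasing on [0, ȳ] and strictly increasing on [ȳ, ∞). -/

import Mathlib

open Set Filter

namespace YIso

noncomputable def u (α y : ℝ) : ℝ := y * (1 + α * y)
noncomputable def g (α y : ℝ) : ℝ := Real.exp (u α y) - 1 - y * (1 + 2*α*y)
noncomputable def g1 (α y : ℝ) : ℝ := (1 + 2*α*y) * Real.exp (u α y) - 1 - 4*α*y
noncomputable def g2 (α y : ℝ) : ℝ := (2*α + (1 + 2*α*y)^2) * Real.exp (u α y) - 4*α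
noncomputable def g3 (α y : ℝ) : ℝ :=
  (1 + 2*α*y) * (6*α + (1 + 2*α*y)^2) * Real.exp (u α y)

lemma hasDerivAt_u (α y : ℝ) : HasDerivAt (u α) (1 + 2*α*y) y := by
  have h1 : HasDerivAt (fun y : ℝ => 1 + α * y) α y := by
    simpa using ((hasDerivAt_id y).const_mul α).const_add 1
  have h2 := (hasDerivAt_id y).fun_mul h1
  refine h2.congr_deriv (Eq.symm ?_)
  simp only [id_eq]; ring

lemma hasDerivAt_expu (α y : ℝ) :
    HasDerivAt (fun y => Real.exp (u α y)) ((1 + 2*α*y) * Real.exp (u α y)) y := by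
  have := (hasDerivAt_u α y).exp
  refine this.congr_deriv (Eq.symm ?_)
  ring

lemma hasDerivAt_g (α y : ℝ) : HasDerivAt (g α) (g1 α y) y := by
  have h1 : HasDerivAt (fun y : ℝ => 1 + 2*α*y) (2*α) y := by
    simpa using ((hasDerivAt_id y).const_mul (2*α)).const_add 1
  have h2 : HasDerivAt (fun y : ℝ => y * (1 + 2*α*y)) (1*(1 + 2*α*y) + y*(2*α)) y := by
    simpa using (hasDerivAt_id y).fun_mul h1
  have h3 := ((hasDerivAt_expu α y).sub_const 1).fun_sub h2
  refine h3.congr_deriv (Eq.symm ?_)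
  simp only [g1]; ring

lemma hasDerivAt_g1 (α y : ℝ) : HasDerivAt (g1 α) (g2 α y) y := by
  have h1 : HasDerivAt (fun y : ℝ => 1 + 2*α*y) (2*α) y := by
    simpa using ((hasDerivAt_id y).const_mul (2*α)).const_add 1
  have h4 : HasDerivAt (fun y : ℝ => 4*α*y) (4*α) y := by
    simpa using ((hasDerivAt_id y).const_mul (4*α))
  have h3 := ((h1.fun_mul (hasDerivAt_expu α y)).sub_const 1).fun_sub h4
  refine h3.congr_deriv (Eq.symm ?_)
  simp only [g2]; ring

lemma hasDerivAt_g2 (α y : ℝ) : HasDerivAt (g2 α) (g3 α y) y := by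
  have h1 : HasDerivAt (fun y : ℝ => 1 + 2*α*y) (2*α) y := by
    simpa using ((hasDerivAt_id y).const_mul (2*α)).const_add 1
  have hsq : HasDerivAt (fun y : ℝ => 2*α + (1 + 2*α*y)^2)
      ((2:ℕ) * (1 + 2*α*y)^(2-1) * (2*α)) y := by
    simpa using ((h1.fun_pow 2).const_add (2*α))
  have h3 := (hsq.fun_mul (hasDerivAt_expu α y)).sub_const (4*α)
  refine h3.congr_deriv (Eq.symm ?_)
  simp only [g3]; push_cast; ring


lemma quad_le_exp {t : ℝ} (ht : 0 ≤ t) : 1 + t + t^2/4 ≤ Real.exp t := by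
  have h := Real.add_one_le_exp (t/2)
  have h2 : Real.exp (t/2) * Real.exp (t/2) = Real.exp t := by
    rw [← Real.exp_add]; ring_nf
  nlinarith [Real.exp_pos (t/2)]

section Signs

variable {α : ℝ} (hα : 1 < 2*α)

lemma u_nonneg (hα : 1 < 2*α) {y : ℝ} (hy : 0 ≤ y) : 0 ≤ u α y := by
  unfold u
  have hα0 : 0 < α := by linarith
  have : (0:ℝ) ≤ 1 + α*y := by nlinarith [mul_nonneg hα0.le hy]
  exact mul_nonneg hy this

lemma u_pos (hα : 1 < 2*α) {y : ℝ} (hy : 0 < y) : 0 < u α y := by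
  unfold u
  have hα0 : 0 < α := by linarith
  have : (0:ℝ) < 1 + α*y := by positivity
  exact mul_pos hy this

lemma g3_pos (hα : 1 < 2*α) {y : ℝ} (hy : 0 ≤ y) : 0 < g3 α y := by
  unfold g3
  have he := Real.exp_pos (u α y)
  have h1 : 0 < 1 + 2*α*y := by nlinarith
  have h2 : 0 < 6*α + (1 + 2*α*y)^2 := by nlinarith
  positivity

lemma g2_zero (hα : 1 < 2*α) : g2 α 0 = 1 - 2*α := by
  simp [g2, u]; ring

lemma g2_one_pos (hα : 1 < 2*α) : 0 < g2 α 1 := by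
  unfold g2
  have he : 1 ≤ Real.exp (u α 1) := Real.one_le_exp (u_nonneg hα zero_le_one)
  nlinarith [sq_nonneg (1 + 2*α*1)]

lemma g1_pos_of_one_le (hα : 1 < 2*α) {y : ℝ} (hy : 1 ≤ y) : 0 < g1 α y := by
  unfold g1 u
  have hy0 : (0:ℝ) < y := lt_of_lt_of_le one_pos hy
  have hα0 : (0:ℝ) < α := by linarith
  have he := Real.add_one_le_exp (y*(1+α*y))
  have h1 : (0:ℝ) < 1 + 2*α*y := by positivity
  have key := mul_le_mul_of_nonneg_left he h1.le
  nlinarith [mul_pos (mul_pos hα0 hy0) (show (0:ℝ) < 3*y - 2 by linarith),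
    mul_pos (mul_pos hα0 (mul_pos hα0 hy0)) (mul_pos hy0 hy0)]

lemma g_pos_of_three_le (hα : 1 < 2*α) {y : ℝ} (hy : 3 ≤ y) : 0 < g α y := by
  unfold g
  have hu : 0 ≤ u α y := u_nonneg hα (by linarith)
  have he : 1 + u α y + (u α y)^2/4 ≤ Real.exp (u α y) := quad_le_exp hu
  have h2 : α * y^2 ≤ u α y := by unfold u; nlinarith
  have h3 : (α * y^2)^2 ≤ (u α y)^2 := by
    apply sq_le_sq' <;> nlinarith
  unfold u at he h2 ⊢
  nlinarith [sq_nonneg y, sq_nonneg (y*y), mul_pos (show (0:ℝ) < α by linarith) (mul_pos (show (0:ℝ) < y by linarith) (show (0:ℝ) < y by linarith))]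

/-- Key step: if `f 0 = 0` and `f'` is negative on `(0,d)`, positive beyond `d`,
and `f` is eventually positive, then `f` is negative on `(0,e)` and positive beyond `e`
for a unique crossing `e > d`. -/
lemma step {f f' : ℝ → ℝ} (hf : ∀ y, HasDerivAt f (f' y) y) (hf0 : f 0 = 0)
    {d Y : ℝ} (hd : 0 < d)
    (hneg : ∀ y ∈ Ioo 0 d, f' y < 0) (hpos : ∀ y, d < y → 0 < f' y)
    (hY : d < Y) (hfY : 0 < f Y) :
    ∃ e, d < e ∧ f e = 0 ∧ (∀ y ∈ Ioo 0 e, f y < 0) ∧ ∀ y, e < y → 0 < f y := by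
  have hcont : Continuous f := by
    have : Differentiable ℝ f := fun y => (hf y).differentiableAt
    exact this.continuous
  have hderiv : ∀ y, deriv f y = f' y := fun y => (hf y).deriv
  have hanti : StrictAntiOn f (Icc 0 d) := by
    apply strictAntiOn_of_deriv_neg (convex_Icc 0 d) hcont.continuousOn
    intro x hx
    rw [interior_Icc] at hx
    rw [hderiv]; exact hneg x hx
  have hmono : StrictMonoOn f (Ici d) := by
    apply strictMonoOn_of_deriv_pos (convex_Ici d) hcont.continuousOn
    intro x hx
    rw [interior_Ici] at hx
    rw [hderiv]; exact hpos x hx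
  have hfd : f d < 0 := by
    have := hanti (left_mem_Icc.mpr hd.le) (right_mem_Icc.mpr hd.le) hd
    rwa [hf0] at this
  obtain ⟨e, he, hfe⟩ := intermediate_value_Ioo hY.le hcont.continuousOn
    (show (0:ℝ) ∈ Ioo (f d) (f Y) from ⟨hfd, hfY⟩)
  refine ⟨e, he.1, hfe, ?_, ?_⟩
  · intro y hy
    rcases le_or_gt y d with h | h
    · have := hanti (left_mem_Icc.mpr hd.le) ⟨hy.1.le, h⟩ hy.1
      rwa [hf0] at this
    · have := hmono (mem_Ici.mpr h.le) (mem_Ici.mpr he.1.le) hy.2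
      rwa [hfe] at this
  · intro y hy
    have := hmono (mem_Ici.mpr he.1.le) (mem_Ici.mpr (he.1.trans hy).le) hy
    rwa [hfe] at this

/-- The sign structure of `g`: there is `e > 0` with `g < 0` on `(0,e)`,
`g e = 0` and `g > 0` beyond `e`. -/
lemma g_sign (hα : 1 < 2*α) :
    ∃ e, 0 < e ∧ g α e = 0 ∧ (∀ y ∈ Ioo 0 e, g α y < 0) ∧ ∀ y, e < y → 0 < g α y := by
  -- g2 structure
  have hg2cont : Continuous (g2 α) := by
    have : Differentiable ℝ (g2 α) := fun y => (hasDerivAt_g2 α y).differentiableAt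
    exact this.continuous
  have hg2mono : StrictMonoOn (g2 α) (Ici 0) := by
    apply strictMonoOn_of_deriv_pos (convex_Ici 0) hg2cont.continuousOn
    intro x hx
    rw [interior_Ici] at hx
    rw [(hasDerivAt_g2 α x).deriv]
    exact g3_pos hα hx.le
  have hg20 : g2 α 0 < 0 := by rw [g2_zero hα]; linarith
  obtain ⟨c, hc, hg2c⟩ := intermediate_value_Ioo (zero_le_one) hg2cont.continuousOn
    (show (0:ℝ) ∈ Ioo (g2 α 0) (g2 α 1) from ⟨hg20, g2_one_pos hα⟩)
  have hc0 : 0 < c := hc.1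
  have hg2neg : ∀ y ∈ Ioo 0 c, g2 α y < 0 := by
    intro y hy
    have := hg2mono (mem_Ici.mpr hy.1.le) (mem_Ici.mpr hc0.le) hy.2
    rwa [hg2c] at this
  have hg2pos : ∀ y, c < y → 0 < g2 α y := by
    intro y hy
    have := hg2mono (mem_Ici.mpr hc0.le) (mem_Ici.mpr (hc0.trans hy).le) hy
    rwa [hg2c] at this
  -- g1 structure
  have hg10 : g1 α 0 = 0 := by simp [g1, u]
  obtain ⟨d, hdc, hg1d, hg1neg, hg1pos⟩ :=
    step (hasDerivAt_g1 α) hg10 hc0 hg2neg hg2pos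
      (show c < max (c+1) 1 from lt_of_lt_of_le (by linarith) (le_max_left _ _))
      (g1_pos_of_one_le hα (le_max_right _ _))
  have hd0 : 0 < d := hc0.trans hdc
  -- g structure
  have hg0 : g α 0 = 0 := by simp [g, u]
  exact step (hasDerivAt_g α) hg0 hd0 hg1neg hg1pos
    (show d < max (d+1) 3 from lt_of_lt_of_le (by linarith) (le_max_left _ _))
    (g_pos_of_three_le hα (le_max_right _ _)) |>.imp
    fun e ⟨h1, h2, h3, h4⟩ => ⟨hd0.trans h1, h2, h3, h4⟩

end Signs


lemma hasDerivAt_F (α y : ℝ) :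
    HasDerivAt (fun y => 1 - Real.exp (-(y * (1 + α * y))))
      ((1 + 2*α*y) * Real.exp (-(y * (1 + α * y)))) y := by
  have := ((hasDerivAt_u α y).fun_neg.exp).const_sub 1
  unfold u at this
  refine this.congr_deriv (Eq.symm ?_)
  ring

lemma one_sub_exp_pos {α : ℝ} (hα : 1 < 2*α) {y : ℝ} (hy : 0 < y) :
    0 < 1 - Real.exp (-(y * (1 + α * y))) := by
  have hu := u_pos hα hy
  unfold u at hu
  have h1 : Real.exp (-(y * (1 + α * y))) < Real.exp 0 := Real.exp_lt_exp.mpr (by linarith)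
  rw [Real.exp_zero] at h1
  linarith

lemma hasDerivAt_H {α β : ℝ} (hα : 1 < 2*α) (hβ : 0 < β) {y : ℝ} (hy : 0 < y) :
    HasDerivAt (fun y => y / (β * (1 - Real.exp (-(y * (1 + α * y))))))
      (β * Real.exp (-(y * (1 + α * y))) * g α y
        / (β * (1 - Real.exp (-(y * (1 + α * y)))))^2) y := by
  have hF0 := one_sub_exp_pos hα hy
  have hD : HasDerivAt (fun y => β * (1 - Real.exp (-(y * (1 + α * y)))))
      (β * ((1 + 2*α*y) * Real.exp (-(y * (1 + α * y))))) y := (hasDerivAt_F α y).const_mul β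
  have hne : β * (1 - Real.exp (-(y * (1 + α * y)))) ≠ 0 := (mul_pos hβ hF0).ne'
  have hdiv := (hasDerivAt_id y).fun_div hD hne
  have hEE : Real.exp (-(y * (1 + α * y))) * Real.exp (y * (1 + α * y)) = 1 := by
    rw [← Real.exp_add]; simp
  refine hdiv.congr_deriv (Eq.symm ?_)
  simp only [g, u, id_eq]
  congr 1
  linear_combination β * hEE

end YIso

theorem y_isocline_unimodal (α β : ℝ) (hα : 1 < 2 * α) (hβ : 0 < β) :
    let h : ℝ → ℝ := fun y =>
      if y = 0 then 1 / β else y / (β * (1 - Real.exp (-(y * (1 + α * y)))))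
    ∃! ybar : ℝ, 0 < ybar ∧
      StrictAntiOn h (Set.Icc 0 ybar) ∧ StrictMonoOn h (Set.Ici ybar) := by
  intro h
  have hα' : 1 < 2*α := hα
  obtain ⟨e, he0, hge, hgneg, hgpos⟩ := YIso.g_sign (α := α) hα'
  set H : ℝ → ℝ := fun y => y / (β * (1 - Real.exp (-(y * (1 + α * y))))) with hH
  have hhH : ∀ {y : ℝ}, y ≠ 0 → h y = H y := by
    intro y hy; simp only [h, hH, if_neg hy]
  have heq : ∀ {y : ℝ}, 0 < y → h =ᶠ[nhds y] H := by
    intro y hy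
    exact (eventually_ne_nhds hy.ne').mono fun x hx => hhH hx
  have hderivh : ∀ {y : ℝ}, 0 < y → deriv h y
      = β * Real.exp (-(y * (1 + α * y))) * YIso.g α y
        / (β * (1 - Real.exp (-(y * (1 + α * y)))))^2 := by
    intro y hy
    rw [Filter.EventuallyEq.deriv_eq (heq hy), (YIso.hasDerivAt_H hα' hβ hy).deriv]
  have hconth : ∀ {y : ℝ}, 0 < y → ContinuousAt h y := by
    intro y hy
    exact ((YIso.hasDerivAt_H hα' hβ hy).differentiableAt.continuousAt).congr (heq hy).symm
  -- continuity at 0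
  have hF0 : HasDerivAt (fun y => 1 - Real.exp (-(y * (1 + α * y)))) 1 0 := by
    have := YIso.hasDerivAt_F α 0
    norm_num at this
    exact this
  have hslope : Filter.Tendsto (fun y => (1 - Real.exp (-(y * (1 + α * y)))) / y)
      (nhdsWithin (0:ℝ) {(0:ℝ)}ᶜ) (nhds 1) := by
    have h2 := hasDerivAt_iff_tendsto_slope.mp hF0
    refine h2.congr fun y => ?_
    simp [slope_def_field]
  have hcont0 : ContinuousAt h 0 := by
    have htend : Filter.Tendsto h (nhds 0) (nhds (1/β)) := by
      rw [← nhdsNE_sup_pure (0:ℝ), Filter.tendsto_sup]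
      constructor
      · have h2 := (hslope.inv₀ one_ne_zero).mul_const β⁻¹
        rw [inv_one, one_mul] at h2
        have h3 : Filter.Tendsto h (nhdsWithin (0:ℝ) {(0:ℝ)}ᶜ) (nhds β⁻¹) := by
          refine Filter.Tendsto.congr' ?_ h2
          filter_upwards [self_mem_nhdsWithin] with y hy
          have hy0 : y ≠ 0 := hy
          rw [hhH hy0, hH, inv_div, ← div_eq_mul_inv, div_div, mul_comm]
        rwa [one_div]
      · have := tendsto_pure_nhds h 0
        simpa [h] using this
    have h0 : h 0 = 1/β := by simp [h]
    rw [ContinuousAt, h0]; exact htend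
  have hantiOn : StrictAntiOn h (Set.Icc 0 e) := by
    refine strictAntiOn_of_deriv_neg (convex_Icc 0 e) ?_ ?_
    · intro x hx
      rcases eq_or_lt_of_le hx.1 with h0 | h0
      · exact (h0 ▸ hcont0).continuousWithinAt
      · exact (hconth h0).continuousWithinAt
    · intro x hx
      rw [interior_Icc] at hx
      rw [hderivh hx.1]
      apply div_neg_of_neg_of_pos
      · exact mul_neg_of_pos_of_neg (mul_pos hβ (Real.exp_pos _)) (hgneg x hx)
      · have := YIso.one_sub_exp_pos hα' hx.1
        positivity
  have hmonoOn : StrictMonoOn h (Set.Ici e) := by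
    refine strictMonoOn_of_deriv_pos (convex_Ici e) ?_ ?_
    · intro x hx
      exact (hconth (lt_of_lt_of_le he0 hx)).continuousWithinAt
    · intro x hx
      rw [interior_Ici] at hx
      rw [hderivh (he0.trans hx)]
      apply div_pos
      · exact mul_pos (mul_pos hβ (Real.exp_pos _)) (hgpos x hx)
      · have := YIso.one_sub_exp_pos hα' (he0.trans hx)
        positivity
  refine ⟨e, ⟨he0, hantiOn, hmonoOn⟩, ?_⟩
  rintro y' ⟨hy'0, ha', hm'⟩
  by_contra hne
  rcases lt_or_gt_of_ne hne with hlt | hgt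
  · have h1 := hm' Set.self_mem_Ici (Set.mem_Ici.mpr hlt.le) hlt
    have h2 := hantiOn (Set.mem_Icc.mpr ⟨hy'0.le, hlt.le⟩)
      (Set.mem_Icc.mpr ⟨he0.le, le_refl e⟩) hlt
    linarith
  · have h1 := hmonoOn Set.self_mem_Ici (Set.mem_Ici.mpr hgt.le) hgt
    have h2 := ha' (Set.mem_Icc.mpr ⟨he0.le, hgt.le⟩)
      (Set.mem_Icc.mpr ⟨hy'0.le, le_refl y'⟩) hgt
    linarith
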